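/- For any MAC W : X1 × X2 → Y on finite alphabets and positive integers k1, k2, the non-signaling assisted success probability satisfies S^NS(W,k1,k2) ≤ min(|X1|/k1, |X2|/k2, |Y|/(k1 k2)). -/

import Mathlib

open Finset

/-- A tripartite non-signaling box `P(x1,x2,(j1,j2)|i1,i2,y)` between the two senders
and the receiver, with `k1` and `k2` messages.  Arguments of `P` are in the order
`x1 x2 j1 j2 i1 i2 y`. -/
def IsNSBox {X1 X2 Y : Type*} [Fintype X1] [Fintype X2] [Fintype Y] (k1 k2 : ℕ)
    (P : X1 → X2 → Fin k1 → Fin k2 → Fin k1 → Fin k2 → Y → ℝ) : Prop :=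
  (∀ x1 x2 j1 j2 i1 i2 y, 0 ≤ P x1 x2 j1 j2 i1 i2 y) ∧
  (∀ i1 i2 y, ∑ x1, ∑ x2, ∑ j1, ∑ j2, P x1 x2 j1 j2 i1 i2 y = 1) ∧
  (∀ x2 j1 j2 i1 i1' i2 y,
    ∑ x1, P x1 x2 j1 j2 i1 i2 y = ∑ x1, P x1 x2 j1 j2 i1' i2 y) ∧
  (∀ x1 j1 j2 i1 i2 i2' y,
    ∑ x2, P x1 x2 j1 j2 i1 i2 y = ∑ x2, P x1 x2 j1 j2 i1 i2' y) ∧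
  (∀ x1 x2 i1 i2 y y',
    ∑ j1, ∑ j2, P x1 x2 j1 j2 i1 i2 y = ∑ j1, ∑ j2, P x1 x2 j1 j2 i1 i2 y')

/-- `S^{NS}(W,k1,k2)`: maximum joint success probability with (tripartite)
non-signaling assistance between both senders and the receiver. -/
noncomputable def SNS {X1 X2 Y : Type*} [Fintype X1] [Fintype X2] [Fintype Y]
    (W : X1 → X2 → Y → ℝ) (k1 k2 : ℕ) : ℝ :=
  sSup {s : ℝ | ∃ P : X1 → X2 → Fin k1 → Fin k2 → Fin k1 → Fin k2 → Y → ℝ,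
    IsNSBox k1 k2 P ∧
    s = (1 / ((k1 : ℝ) * (k2 : ℝ))) * ∑ i1, ∑ i2, ∑ x1, ∑ x2, ∑ y,
      W x1 x2 y * P x1 x2 i1 i2 i1 i2 y}

theorem SNS_aux_Y {X1 X2 Y : Type*} [Fintype X1] [Fintype X2] [Fintype Y]
    (W : X1 → X2 → Y → ℝ)
    (hW0 : ∀ x1 x2 y, 0 ≤ W x1 x2 y)
    (hW1 : ∀ x1 x2, ∑ y, W x1 x2 y = 1)
    (k1 k2 : ℕ) (hk1 : 0 < k1) (hk2 : 0 < k2)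
    (P : X1 → X2 → Fin k1 → Fin k2 → Fin k1 → Fin k2 → Y → ℝ)
    (hbox : IsNSBox k1 k2 P) :
    ∑ i1, ∑ i2, ∑ x1, ∑ x2, ∑ y, W x1 x2 y * P x1 x2 i1 i2 i1 i2 y
      ≤ (Fintype.card Y : ℝ) := by
  obtain ⟨h0, h1, hA, hB, hNY⟩ := hbox
  set i1₀ : Fin k1 := ⟨0, hk1⟩
  set i2₀ : Fin k2 := ⟨0, hk2⟩
  have hWle : ∀ x1 x2 y, W x1 x2 y ≤ 1 := fun x1 x2 y => by
    rw [← hW1 x1 x2]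
    exact Finset.single_le_sum (fun y _ => hW0 x1 x2 y) (Finset.mem_univ y)
  have hy1 : ∀ y : Y, ∑ i1, ∑ i2, ∑ x1, ∑ x2, P x1 x2 i1 i2 i1 i2 y = 1 := by
    intro y
    calc ∑ i1, ∑ i2, ∑ x1, ∑ x2, P x1 x2 i1 i2 i1 i2 y
        = ∑ i1, ∑ i2, ∑ x2, ∑ x1, P x1 x2 i1 i2 i1 i2 y := by
          conv_lhs => enter [2, i1, 2, i2]; rw [Finset.sum_comm]
      _ = ∑ i1, ∑ i2, ∑ x2, ∑ x1, P x1 x2 i1 i2 i1₀ i2 y :=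
          Finset.sum_congr rfl fun i1 _ => Finset.sum_congr rfl fun i2 _ =>
            Finset.sum_congr rfl fun x2 _ => hA x2 i1 i2 i1 i1₀ i2 y
      _ = ∑ i1, ∑ i2, ∑ x1, ∑ x2, P x1 x2 i1 i2 i1₀ i2 y := by
          conv_rhs => enter [2, i1, 2, i2]; rw [Finset.sum_comm]
      _ = ∑ i1, ∑ i2, ∑ x1, ∑ x2, P x1 x2 i1 i2 i1₀ i2₀ y :=
          Finset.sum_congr rfl fun i1 _ => Finset.sum_congr rfl fun i2 _ =>
            Finset.sum_congr rfl fun x1 _ => hB x1 i1 i2 i1₀ i2 i2₀ y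
      _ = ∑ x1, ∑ x2, ∑ i1, ∑ i2, P x1 x2 i1 i2 i1₀ i2₀ y := by
          conv_lhs => enter [2, i1]; rw [Finset.sum_comm]
          conv_lhs => rw [Finset.sum_comm]
          conv_lhs => enter [2, x1, 2, i1]; rw [Finset.sum_comm]
          conv_lhs => enter [2, x1]; rw [Finset.sum_comm]
      _ = 1 := h1 i1₀ i2₀ y
  calc ∑ i1, ∑ i2, ∑ x1, ∑ x2, ∑ y, W x1 x2 y * P x1 x2 i1 i2 i1 i2 y
      ≤ ∑ i1, ∑ i2, ∑ x1, ∑ x2, ∑ y, P x1 x2 i1 i2 i1 i2 y := by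
        gcongr with i1 _ i2 _ x1 _ x2 _ y _
        exact mul_le_of_le_one_left (h0 x1 x2 i1 i2 i1 i2 y) (hWle x1 x2 y)
    _ = ∑ y : Y, ∑ i1, ∑ i2, ∑ x1, ∑ x2, P x1 x2 i1 i2 i1 i2 y := by
        conv_lhs => enter [2, i1, 2, i2, 2, x1]; rw [Finset.sum_comm]
        conv_lhs => enter [2, i1, 2, i2]; rw [Finset.sum_comm]
        conv_lhs => enter [2, i1]; rw [Finset.sum_comm]
        conv_lhs => rw [Finset.sum_comm]
    _ = ∑ _y : Y, (1:ℝ) := Finset.sum_congr rfl fun y _ => hy1 y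
    _ = (Fintype.card Y : ℝ) := by simp

theorem SNS_aux_X1 {X1 X2 Y : Type*} [Fintype X1] [Fintype X2] [Fintype Y]
    (W : X1 → X2 → Y → ℝ)
    (hW0 : ∀ x1 x2 y, 0 ≤ W x1 x2 y)
    (hW1 : ∀ x1 x2, ∑ y, W x1 x2 y = 1)
    (k1 k2 : ℕ) (hk1 : 0 < k1) (hk2 : 0 < k2)
    (P : X1 → X2 → Fin k1 → Fin k2 → Fin k1 → Fin k2 → Y → ℝ)
    (hbox : IsNSBox k1 k2 P) :
    ∑ i1, ∑ i2, ∑ x1, ∑ x2, ∑ y, W x1 x2 y * P x1 x2 i1 i2 i1 i2 y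
      ≤ (Fintype.card X1 : ℝ) * k2 := by
  obtain ⟨h0, h1, hA, hB, hNY⟩ := hbox
  set i1₀ : Fin k1 := ⟨0, hk1⟩ with hi10
  by_cases hYne : Nonempty Y
  · obtain ⟨y₀⟩ := hYne
    -- key: per (x1, i2) the inner triple sum is ≤ 1
    have key : ∀ (x1 : X1) (i2 : Fin k2),
        ∑ i1, ∑ x2, ∑ y, W x1 x2 y * P x1 x2 i1 i2 i1 i2 y ≤ 1 := by
      intro x1 i2
      set G : X2 → ℝ := fun x2 => ∑ x1', ∑ j1, ∑ j2, P x1' x2 j1 j2 i1₀ i2 y₀ with hG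
      have hkey2 : ∀ (x2 : X2) (y : Y),
          ∑ i1, P x1 x2 i1 i2 i1 i2 y ≤ G x2 := by
        intro x2 y
        calc ∑ i1, P x1 x2 i1 i2 i1 i2 y
            ≤ ∑ i1, ∑ x1', P x1' x2 i1 i2 i1 i2 y :=
              Finset.sum_le_sum fun i1 _ =>
                Finset.single_le_sum (fun x1' _ => h0 x1' x2 i1 i2 i1 i2 y)
                  (Finset.mem_univ x1)
          _ = ∑ i1, ∑ x1', P x1' x2 i1 i2 i1₀ i2 y :=
              Finset.sum_congr rfl fun i1 _ => hA x2 i1 i2 i1 i1₀ i2 y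
          _ ≤ ∑ j1, ∑ j2, ∑ x1', P x1' x2 j1 j2 i1₀ i2 y := by
              apply Finset.sum_le_sum
              intro i1 _
              exact Finset.single_le_sum
                (f := fun j2 => ∑ x1', P x1' x2 i1 j2 i1₀ i2 y)
                (fun j2 _ => Finset.sum_nonneg fun x1' _ => h0 x1' x2 i1 j2 i1₀ i2 y)
                (Finset.mem_univ i2)
          _ = ∑ x1', ∑ j1, ∑ j2, P x1' x2 j1 j2 i1₀ i2 y := by
              conv_lhs => enter [2, j1]; rw [Finset.sum_comm]
              conv_lhs => rw [Finset.sum_comm]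
          _ = G x2 :=
              Finset.sum_congr rfl fun x1' _ => hNY x1' x2 i1₀ i2 y y₀
      calc ∑ i1, ∑ x2, ∑ y, W x1 x2 y * P x1 x2 i1 i2 i1 i2 y
          = ∑ x2, ∑ y, ∑ i1, W x1 x2 y * P x1 x2 i1 i2 i1 i2 y := by
            conv_lhs => rw [Finset.sum_comm]
            conv_lhs => enter [2, x2]; rw [Finset.sum_comm]
        _ = ∑ x2, ∑ y, W x1 x2 y * ∑ i1, P x1 x2 i1 i2 i1 i2 y := by
            simp [Finset.mul_sum]
        _ ≤ ∑ x2, ∑ y, W x1 x2 y * G x2 := by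
            apply Finset.sum_le_sum; intro x2 _
            apply Finset.sum_le_sum; intro y _
            exact mul_le_mul_of_nonneg_left (hkey2 x2 y) (hW0 x1 x2 y)
        _ = ∑ x2, (∑ y, W x1 x2 y) * G x2 := by
            simp [Finset.sum_mul]
        _ = ∑ x2, G x2 := by
            refine Finset.sum_congr rfl fun x2 _ => ?_
            rw [hW1 x1 x2, one_mul]
        _ = ∑ x1', ∑ x2, ∑ j1, ∑ j2, P x1' x2 j1 j2 i1₀ i2 y₀ := by
            rw [Finset.sum_comm]
        _ = 1 := h1 i1₀ i2 y₀
    calc ∑ i1, ∑ i2, ∑ x1, ∑ x2, ∑ y, W x1 x2 y * P x1 x2 i1 i2 i1 i2 y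
        = ∑ x1, ∑ i2, ∑ i1, ∑ x2, ∑ y, W x1 x2 y * P x1 x2 i1 i2 i1 i2 y := by
          conv_lhs => rw [Finset.sum_comm]
          conv_lhs => enter [2, i2]; rw [Finset.sum_comm]
          conv_lhs => rw [Finset.sum_comm]
      _ ≤ ∑ _x1 : X1, ∑ _i2 : Fin k2, (1:ℝ) :=
          Finset.sum_le_sum fun x1 _ => Finset.sum_le_sum fun i2 _ => key x1 i2
      _ = (Fintype.card X1 : ℝ) * k2 := by simp [mul_comm]
  · have : IsEmpty Y := not_nonempty_iff.mp hYne
    have hz : ∀ (i1 : Fin k1) (i2 : Fin k2) (x1 : X1) (x2 : X2),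
        ∑ y, W x1 x2 y * P x1 x2 i1 i2 i1 i2 y = 0 := by
      intro i1 i2 x1 x2; simp
    simp only [hz, Finset.sum_const_zero]
    positivity

theorem SNS_aux_X2 {X1 X2 Y : Type*} [Fintype X1] [Fintype X2] [Fintype Y]
    (W : X1 → X2 → Y → ℝ)
    (hW0 : ∀ x1 x2 y, 0 ≤ W x1 x2 y)
    (hW1 : ∀ x1 x2, ∑ y, W x1 x2 y = 1)
    (k1 k2 : ℕ) (hk1 : 0 < k1) (hk2 : 0 < k2)
    (P : X1 → X2 → Fin k1 → Fin k2 → Fin k1 → Fin k2 → Y → ℝ)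
    (hbox : IsNSBox k1 k2 P) :
    ∑ i1, ∑ i2, ∑ x1, ∑ x2, ∑ y, W x1 x2 y * P x1 x2 i1 i2 i1 i2 y
      ≤ (k1 : ℝ) * (Fintype.card X2 : ℝ) := by
  obtain ⟨h0, h1, hA, hB, hNY⟩ := hbox
  set i2₀ : Fin k2 := ⟨0, hk2⟩ with hi20
  by_cases hYne : Nonempty Y
  · obtain ⟨y₀⟩ := hYne
    have key : ∀ (i1 : Fin k1) (x2 : X2),
        ∑ i2, ∑ x1, ∑ y, W x1 x2 y * P x1 x2 i1 i2 i1 i2 y ≤ 1 := by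
      intro i1 x2
      set G : X1 → ℝ := fun x1 => ∑ x2', ∑ j1, ∑ j2, P x1 x2' j1 j2 i1 i2₀ y₀ with hG
      have hkey2 : ∀ (x1 : X1) (y : Y),
          ∑ i2, P x1 x2 i1 i2 i1 i2 y ≤ G x1 := by
        intro x1 y
        calc ∑ i2, P x1 x2 i1 i2 i1 i2 y
            ≤ ∑ i2, ∑ x2', P x1 x2' i1 i2 i1 i2 y :=
              Finset.sum_le_sum fun i2 _ =>
                Finset.single_le_sum (fun x2' _ => h0 x1 x2' i1 i2 i1 i2 y)
                  (Finset.mem_univ x2)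
          _ = ∑ i2, ∑ x2', P x1 x2' i1 i2 i1 i2₀ y :=
              Finset.sum_congr rfl fun i2 _ => hB x1 i1 i2 i1 i2 i2₀ y
          _ ≤ ∑ j1, ∑ j2, ∑ x2', P x1 x2' j1 j2 i1 i2₀ y :=
              Finset.single_le_sum
                (f := fun j1 => ∑ j2, ∑ x2', P x1 x2' j1 j2 i1 i2₀ y)
                (fun j1 _ => Finset.sum_nonneg fun j2 _ =>
                  Finset.sum_nonneg fun x2' _ => h0 x1 x2' j1 j2 i1 i2₀ y)
                (Finset.mem_univ i1)
          _ = ∑ x2', ∑ j1, ∑ j2, P x1 x2' j1 j2 i1 i2₀ y := by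
              conv_lhs => enter [2, j1]; rw [Finset.sum_comm]
              conv_lhs => rw [Finset.sum_comm]
          _ = G x1 :=
              Finset.sum_congr rfl fun x2' _ => hNY x1 x2' i1 i2₀ y y₀
      calc ∑ i2, ∑ x1, ∑ y, W x1 x2 y * P x1 x2 i1 i2 i1 i2 y
          = ∑ x1, ∑ y, ∑ i2, W x1 x2 y * P x1 x2 i1 i2 i1 i2 y := by
            conv_lhs => rw [Finset.sum_comm]
            conv_lhs => enter [2, x1]; rw [Finset.sum_comm]
        _ = ∑ x1, ∑ y, W x1 x2 y * ∑ i2, P x1 x2 i1 i2 i1 i2 y := by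
            simp [Finset.mul_sum]
        _ ≤ ∑ x1, ∑ y, W x1 x2 y * G x1 := by
            apply Finset.sum_le_sum; intro x1 _
            apply Finset.sum_le_sum; intro y _
            exact mul_le_mul_of_nonneg_left (hkey2 x1 y) (hW0 x1 x2 y)
        _ = ∑ x1, (∑ y, W x1 x2 y) * G x1 := by
            simp [Finset.sum_mul]
        _ = ∑ x1, G x1 := by
            refine Finset.sum_congr rfl fun x1 _ => ?_
            rw [hW1 x1 x2, one_mul]
        _ = 1 := h1 i1 i2₀ y₀
    calc ∑ i1, ∑ i2, ∑ x1, ∑ x2, ∑ y, W x1 x2 y * P x1 x2 i1 i2 i1 i2 y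
        = ∑ i1, ∑ x2, ∑ i2, ∑ x1, ∑ y, W x1 x2 y * P x1 x2 i1 i2 i1 i2 y := by
          conv_lhs => enter [2, i1, 2, i2]; rw [Finset.sum_comm]
          conv_lhs => enter [2, i1]; rw [Finset.sum_comm]
      _ ≤ ∑ _i1 : Fin k1, ∑ _x2 : X2, (1:ℝ) :=
          Finset.sum_le_sum fun i1 _ => Finset.sum_le_sum fun x2 _ => key i1 x2
      _ = (k1 : ℝ) * (Fintype.card X2 : ℝ) := by simp [mul_comm]
  · have : IsEmpty Y := not_nonempty_iff.mp hYne
    have hz : ∀ (i1 : Fin k1) (i2 : Fin k2) (x1 : X1) (x2 : X2),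
        ∑ y, W x1 x2 y * P x1 x2 i1 i2 i1 i2 y = 0 := by
      intro i1 i2 x1 x2; simp
    simp only [hz, Finset.sum_const_zero]
    positivity

/-- `S^{NS}(W,k1,k2) ≤ min(|X1|/k1, |X2|/k2, |Y|/(k1 k2))`. -/
theorem SNS_le_min {X1 X2 Y : Type*} [Fintype X1] [Fintype X2] [Fintype Y]
    (W : X1 → X2 → Y → ℝ)
    (hW0 : ∀ x1 x2 y, 0 ≤ W x1 x2 y)
    (hW1 : ∀ x1 x2, ∑ y, W x1 x2 y = 1)
    (k1 k2 : ℕ) (hk1 : 0 < k1) (hk2 : 0 < k2) :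
    SNS W k1 k2 ≤
      min ((Fintype.card X1 : ℝ) / (k1 : ℝ))
        (min ((Fintype.card X2 : ℝ) / (k2 : ℝ))
          ((Fintype.card Y : ℝ) / ((k1 : ℝ) * (k2 : ℝ)))) := by
  have hk1' : (0:ℝ) < (k1 : ℝ) := by exact_mod_cast hk1
  have hk2' : (0:ℝ) < (k2 : ℝ) := by exact_mod_cast hk2
  have hmin0 : (0:ℝ) ≤ min ((Fintype.card X1 : ℝ) / (k1 : ℝ))
      (min ((Fintype.card X2 : ℝ) / (k2 : ℝ))
        ((Fintype.card Y : ℝ) / ((k1 : ℝ) * (k2 : ℝ)))) :=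
    le_min (by positivity) (le_min (by positivity) (by positivity))
  rw [SNS]
  apply Real.sSup_le _ hmin0
  rintro s ⟨P, hbox, rfl⟩
  set S : ℝ := ∑ i1, ∑ i2, ∑ x1, ∑ x2, ∑ y,
      W x1 x2 y * P x1 x2 i1 i2 i1 i2 y with hS
  refine le_min ?_ (le_min ?_ ?_)
  · calc (1 / ((k1 : ℝ) * (k2 : ℝ))) * S
        ≤ (1 / ((k1 : ℝ) * (k2 : ℝ))) * ((Fintype.card X1 : ℝ) * (k2 : ℝ)) :=
          mul_le_mul_of_nonneg_left
            (SNS_aux_X1 W hW0 hW1 k1 k2 hk1 hk2 P hbox) (by positivity)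
      _ = (Fintype.card X1 : ℝ) / (k1 : ℝ) := by field_simp
  · calc (1 / ((k1 : ℝ) * (k2 : ℝ))) * S
        ≤ (1 / ((k1 : ℝ) * (k2 : ℝ))) * ((k1 : ℝ) * (Fintype.card X2 : ℝ)) :=
          mul_le_mul_of_nonneg_left
            (SNS_aux_X2 W hW0 hW1 k1 k2 hk1 hk2 P hbox) (by positivity)
      _ = (Fintype.card X2 : ℝ) / (k2 : ℝ) := by field_simp
  · calc (1 / ((k1 : ℝ) * (k2 : ℝ))) * S
        ≤ (1 / ((k1 : ℝ) * (k2 : ℝ))) * (Fintype.card Y : ℝ) :=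
          mul_le_mul_of_nonneg_left
            (SNS_aux_Y W hW0 hW1 k1 k2 hk1 hk2 P hbox) (by positivity)
      _ = (Fintype.card Y : ℝ) / ((k1 : ℝ) * (k2 : ℝ)) := by
          rw [one_div_mul_eq_div]
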